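/- If f: ℂ^g → ℂ is entire, nowhere zero, and satisfies the theta quasi-periodicity f(z + N + TM) = exp(−πi(M,TM) − 2πi(M,z)) f(z) for all N,M ∈ ℤ^g, with g ≥ 1 and Im T positive definite, then a contradiction arises; i.e., the theta function Θ must have zeros. -/

import Mathlib

set_option maxHeartbeats 1000000
open Complex Finset

lemma aux_logDeriv_cont (F : ℂ → ℂ) (hF : Differentiable ℂ F) (h0 : ∀ z, F z ≠ 0) :
    Continuous (logDeriv F) := by
  have hd : Continuous (deriv F) :=
    (hF.contDiff (n := 1)).continuous_deriv le_rfl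
  have : Continuous (fun z => deriv F z / F z) := hd.div hF.continuous h0
  exact this

lemma aux_exp_integral_logDeriv (F : ℂ → ℂ) (hF : Differentiable ℂ F) (h0 : ∀ z, F z ≠ 0) :
    F 1 = F 0 * Complex.exp (∫ w in (0:ℝ)..1, logDeriv F w) := by
  have hcont : Continuous fun x : ℝ => logDeriv F ↑x :=
    (aux_logDeriv_cont F hF h0).comp continuous_ofReal
  set L : ℝ → ℂ := fun x => ∫ w in (0:ℝ)..x, logDeriv F ↑w with hL
  have hLd : ∀ x : ℝ, HasDerivAt L (logDeriv F ↑x) x := fun x =>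
    (hcont.integral_hasStrictDerivAt 0 x).hasDerivAt
  set G : ℝ → ℂ := fun x => F ↑x * Complex.exp (-L x) with hG
  have hGd : ∀ x : ℝ, HasDerivAt G 0 x := by
    intro x
    have h1 : HasDerivAt (fun y : ℝ => F ↑y) (deriv F ↑x) x :=
      ((hF ↑x).hasDerivAt).comp_ofReal
    have h2 : HasDerivAt (fun y : ℝ => Complex.exp (-L y))
        (Complex.exp (-L x) * (-(logDeriv F ↑x))) x := ((hLd x).neg).cexp
    have := h1.mul h2
    refine this.congr_deriv ?_
    rw [logDeriv_apply]
    field_simp [h0 (↑x : ℂ)]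
    ring
  have hconst : G 1 = G 0 := by
    have : ∀ x y : ℝ, G x = G y :=
      is_const_of_deriv_eq_zero (fun x => (hGd x).differentiableAt)
        (fun x => (hGd x).deriv)
    exact this 1 0
  have hL0 : L 0 = 0 := intervalIntegral.integral_same
  rw [hG] at hconst
  simp only [hL0, neg_zero, Complex.exp_zero, mul_one] at hconst
  have hexp := Complex.exp_ne_zero (-L 1)
  field_simp at hconst ⊢
  simp only [Complex.ofReal_one, Complex.ofReal_zero] at hconst
  rw [← hconst, mul_assoc, ← Complex.exp_add]
  simp [hL]

lemma aux_logDeriv_exp_affine (a b x : ℂ) :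
    logDeriv (fun w => Complex.exp (a + b * w)) x = b := by
  have hl : HasDerivAt (fun w : ℂ => a + b * w) b x := by
    simpa using ((hasDerivAt_id x).const_mul b).const_add a
  have h : HasDerivAt (fun w => Complex.exp (a + b * w))
      (Complex.exp (a + b * x) * b) x := hl.cexp
  rw [logDeriv_apply, h.deriv]
  field_simp [Complex.exp_ne_zero]


lemma aux_main (Φ : ℂ → ℂ → ℂ) (hdiff : ∀ t, Differentiable ℂ (Φ t))
    (hcont : Continuous fun q : ℂ × ℂ => Φ q.1 q.2)
    (hn0 : ∀ t w, Φ t w ≠ 0)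
    (hper : ∀ t w, Φ t (w + 1) = Φ t w)
    (c : ℂ)
    (hshift : ∀ w, Φ 1 w = Complex.exp (c + (-(2 * (Real.pi : ℂ) * I)) * w) * Φ 0 w) :
    False := by
  classical
  set W : ℂ → ℂ := fun t => ∫ x in (0:ℝ)..1, logDeriv (Φ t) ↑x with hW
  -- each Φ t has a trivial "period integral" in 2πiℤ
  have hexpW : ∀ t, Complex.exp (W t) = 1 := by
    intro t
    have h := aux_exp_integral_logDeriv (Φ t) (hdiff t) (fun z => hn0 t z)
    have h1 : Φ t 1 = Φ t 0 := by simpa using hper t 0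
    rw [h1] at h
    have := hn0 t 0
    simp only [hW]
    exact (mul_left_cancel₀ (hn0 t 0) (by rw [mul_one]; exact h)).symm
  have hWint : ∀ t, ∃ n : ℤ, W t = n * (2 * Real.pi * I) := fun t =>
    Complex.exp_eq_one_iff.mp (hexpW t)
  -- locally uniform convergence of the family and its derivatives
  have hTLU : ∀ t₀ : ℂ, TendstoLocallyUniformlyOn Φ (Φ t₀) (nhds t₀) Set.univ := by
    intro t₀
    rw [tendstoLocallyUniformlyOn_iff_forall_isCompact isOpen_univ]
    intro K _ hK
    rw [Metric.tendstoUniformlyOn_iff]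
    intro ε hε
    have hCc : IsCompact ((Metric.closedBall t₀ 1) ×ˢ K) :=
      (isCompact_closedBall t₀ 1).prod hK
    have huc : UniformContinuousOn (fun q : ℂ × ℂ => Φ q.1 q.2)
        ((Metric.closedBall t₀ 1) ×ˢ K) :=
      hCc.uniformContinuousOn_of_continuous hcont.continuousOn
    rw [Metric.uniformContinuousOn_iff] at huc
    obtain ⟨δ, hδ, hδ'⟩ := huc ε hε
    filter_upwards [Metric.ball_mem_nhds t₀ (lt_min hδ zero_lt_one)] with t ht
    intro w hw
    have h1 : ((t₀, w) : ℂ × ℂ) ∈ (Metric.closedBall t₀ 1) ×ˢ K :=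
      ⟨Metric.mem_closedBall_self zero_le_one, hw⟩
    have ht' : dist t t₀ < min δ 1 := Metric.mem_ball.mp ht
    have h2 : ((t, w) : ℂ × ℂ) ∈ (Metric.closedBall t₀ 1) ×ˢ K :=
      ⟨Metric.mem_closedBall.mpr (le_of_lt (lt_of_lt_of_le ht' (min_le_right _ _))), hw⟩
    have hd : dist ((t₀, w) : ℂ × ℂ) ((t, w) : ℂ × ℂ) < δ := by
      rw [Prod.dist_eq]
      simp only [dist_self]
      have h0 : dist t₀ t < δ := by
        rw [dist_comm]; exact lt_of_lt_of_le ht' (min_le_left _ _)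
      exact max_lt h0 hδ
    simpa using hδ' _ h1 _ h2 hd
  have hTLUd : ∀ t₀ : ℂ, TendstoLocallyUniformlyOn (deriv ∘ Φ) (deriv (Φ t₀))
      (nhds t₀) Set.univ := fun t₀ =>
    (hTLU t₀).deriv (Filter.Eventually.of_forall fun t => (hdiff t).differentiableOn)
      isOpen_univ
  -- continuity of W
  have hWcont : Continuous W := by
    rw [continuous_iff_continuousAt]
    intro t₀
    have hKc : IsCompact (Complex.ofReal '' Set.Icc (0:ℝ) 1) :=
      isCompact_Icc.image Complex.continuous_ofReal
    have hKne : (Complex.ofReal '' Set.Icc (0:ℝ) 1).Nonempty :=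
      ⟨0, ⟨0, by norm_num, by norm_num⟩⟩
    obtain ⟨z₀, hz₀K, hz₀⟩ := hKc.exists_isMinOn hKne
      ((hdiff t₀).continuous.norm.continuousOn)
    have hderc : Continuous (deriv (Φ t₀)) :=
      ((hdiff t₀).contDiff (n := 1)).continuous_deriv le_rfl
    obtain ⟨z₁, hz₁K, hz₁⟩ := hKc.exists_isMaxOn hKne hderc.norm.continuousOn
    have hm : 0 < ‖Φ t₀ z₀‖ := norm_pos_iff.mpr (hn0 _ _)
    have hU1 : ∀ᶠ t in nhds t₀, ∀ z ∈ Complex.ofReal '' Set.Icc (0:ℝ) 1,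
        dist (Φ t₀ z) (Φ t z) < ‖Φ t₀ z₀‖ / 2 := by
      have h := (tendstoLocallyUniformlyOn_iff_forall_isCompact isOpen_univ).mp
        (hTLU t₀) _ (Set.subset_univ _) hKc
      exact (Metric.tendstoUniformlyOn_iff.mp h) _ (by positivity)
    have hU2 : ∀ᶠ t in nhds t₀, ∀ z ∈ Complex.ofReal '' Set.Icc (0:ℝ) 1,
        dist (deriv (Φ t₀) z) (deriv (Φ t) z) < 1 := by
      have h := (tendstoLocallyUniformlyOn_iff_forall_isCompact isOpen_univ).mp
        (hTLUd t₀) _ (Set.subset_univ _) hKc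
      exact (Metric.tendstoUniformlyOn_iff.mp h) _ one_pos
    have key : Filter.Tendsto (fun t => ∫ x in (0:ℝ)..1, logDeriv (Φ t) ↑x) (nhds t₀)
        (nhds (∫ x in (0:ℝ)..1, logDeriv (Φ t₀) ↑x)) := by
      apply intervalIntegral.tendsto_integral_filter_of_dominated_convergence
        (fun _ => (‖deriv (Φ t₀) z₁‖ + 1) / (‖Φ t₀ z₀‖ / 2))
      · exact Filter.Eventually.of_forall fun t =>
          ((aux_logDeriv_cont (Φ t) (hdiff t) fun z => hn0 t z).comp
            Complex.continuous_ofReal).aestronglyMeasurable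
      · filter_upwards [hU1, hU2] with t h1 h2
        refine MeasureTheory.ae_of_all _ fun x hx => ?_
        have hxI : x ∈ Set.Icc (0:ℝ) 1 := by
          rw [Set.uIoc_of_le zero_le_one] at hx
          exact Set.Ioc_subset_Icc_self hx
        have hxK : (x : ℂ) ∈ Complex.ofReal '' Set.Icc (0:ℝ) 1 := ⟨x, hxI, rfl⟩
        have e1 := h1 _ hxK
        have e2 := h2 _ hxK
        rw [dist_eq_norm] at e1 e2
        have hΦt : ‖Φ t₀ z₀‖ / 2 ≤ ‖Φ t ↑x‖ := by
          have := norm_sub_norm_le (Φ t₀ ↑x) (Φ t ↑x)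
          have h00 : ‖Φ t₀ z₀‖ ≤ ‖Φ t₀ ↑x‖ := hz₀ hxK
          linarith
        have hD : ‖deriv (Φ t) ↑x‖ ≤ ‖deriv (Φ t₀) z₁‖ + 1 := by
          have h3 : ‖deriv (Φ t) ↑x‖ - ‖deriv (Φ t₀) ↑x‖ ≤
              ‖deriv (Φ t₀) ↑x - deriv (Φ t) ↑x‖ := by
            rw [norm_sub_rev]
            exact norm_sub_norm_le _ _
          have h01 : ‖deriv (Φ t₀) ↑x‖ ≤ ‖deriv (Φ t₀) z₁‖ := hz₁ hxK
          linarith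
        rw [logDeriv_apply, norm_div]
        exact div_le_div₀ (by positivity) hD (by positivity) hΦt
      · exact intervalIntegrable_const
      · refine MeasureTheory.ae_of_all _ fun x _ => ?_
        exact Complex.logDeriv_tendsto isOpen_univ (x := (x:ℂ)) trivial (hTLU t₀)
          (Filter.Eventually.of_forall fun t => (hdiff t).differentiableOn) (hn0 _ _)
    exact key
  -- W is constant : clopen argument
  have hW10 : W 1 = W 0 := by
    have hSc : IsClosed {t : ℂ | W t = W 0} := isClosed_eq hWcont continuous_const
    have hSo : IsOpen {t : ℂ | W t = W 0} := by
      rw [Metric.isOpen_iff]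
      intro t ht
      have hcA : Filter.Tendsto W (nhds t) (nhds (W t)) := hWcont.continuousAt
      have h1 : ∀ᶠ s in nhds t, dist (W s) (W t) < 1 :=
        (Metric.tendsto_nhds.mp hcA) 1 one_pos
      obtain ⟨δ, hδ, hball⟩ := Metric.eventually_nhds_iff_ball.mp h1
      refine ⟨δ, hδ, fun s hs => ?_⟩
      have hd := hball s hs
      obtain ⟨n, hn⟩ := hWint s
      obtain ⟨nt, hnt⟩ := hWint t
      have heq : n = nt := by
        by_contra hne2
        have h4 : (1:ℝ) ≤ |((n - nt : ℤ) : ℝ)| := by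
          exact_mod_cast Int.one_le_abs (sub_ne_zero.mpr hne2)
        have h5 : dist (W s) (W t) = |((n - nt : ℤ) : ℝ)| * ‖2 * (Real.pi:ℂ) * I‖ := by
          rw [dist_eq_norm, hn, hnt, ← sub_mul, norm_mul]
          congr 1
          rw [show ((n:ℂ) - (nt:ℂ)) = (((n - nt : ℤ) : ℝ) : ℂ) by push_cast; ring,
            Complex.norm_real, Real.norm_eq_abs]
        have h6 : ‖2 * (Real.pi:ℂ) * I‖ = 2 * Real.pi := by
          rw [norm_mul, norm_mul, Complex.norm_I, mul_one]
          simp [Complex.norm_real, Real.norm_eq_abs, _root_.abs_of_nonneg Real.pi_pos.le]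
        rw [h6] at h5
        nlinarith [Real.pi_gt_three]
      have : W s = W t := by rw [hn, heq, ← hnt]
      rw [Set.mem_setOf_eq, this]
      exact ht
    have huniv : {t : ℂ | W t = W 0} = Set.univ :=
      IsClopen.eq_univ ⟨hSc, hSo⟩ ⟨0, rfl⟩
    have : (1:ℂ) ∈ {t : ℂ | W t = W 0} := huniv ▸ Set.mem_univ _
    exact this
  -- but the shift forces W 1 = W 0 - 2πi
  have hΦ1 : Φ 1 = fun w => Complex.exp (c + (-(2 * (Real.pi : ℂ) * I)) * w) * Φ 0 w :=
    funext hshift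
  have hlogshift : ∀ x : ℝ, logDeriv (Φ 1) ↑x = -(2 * (Real.pi:ℂ) * I) + logDeriv (Φ 0) ↑x := by
    intro x
    rw [hΦ1]
    have hde : DifferentiableAt ℂ (fun w : ℂ => Complex.exp (c + (-(2 * (Real.pi:ℂ) * I)) * w)) ↑x := by
      apply DifferentiableAt.cexp
      exact (differentiableAt_const _).add ((differentiableAt_id).const_mul _)
    rw [logDeriv_mul (f := fun w : ℂ => Complex.exp (c + (-(2 * (Real.pi:ℂ) * I)) * w)) (g := Φ 0) ↑x (Complex.exp_ne_zero _) (hn0 0 ↑x) hde ((hdiff 0).differentiableAt)]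
    rw [aux_logDeriv_exp_affine]
  have hint : IntervalIntegrable (fun x : ℝ => logDeriv (Φ 0) ↑x) MeasureTheory.volume 0 1 :=
    ((aux_logDeriv_cont (Φ 0) (hdiff 0) fun z => hn0 0 z).comp
      Complex.continuous_ofReal).intervalIntegrable 0 1
  have hWcalc : W 1 = -(2 * (Real.pi:ℂ) * I) + W 0 := by
    calc W 1 = ∫ x in (0:ℝ)..1, (-(2 * (Real.pi:ℂ) * I) + logDeriv (Φ 0) ↑x) :=
          intervalIntegral.integral_congr fun x _ => hlogshift x
      _ = (∫ _x in (0:ℝ)..1, -(2 * (Real.pi:ℂ) * I)) + ∫ x in (0:ℝ)..1, logDeriv (Φ 0) ↑x :=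
          intervalIntegral.integral_add intervalIntegrable_const hint
      _ = -(2 * (Real.pi:ℂ) * I) + W 0 := by
          rw [intervalIntegral.integral_const]
          simp
          rfl
  rw [hW10] at hWcalc
  have hz : (2 * (Real.pi:ℂ) * I) = 0 := by
    have h' : -(2 * (Real.pi:ℂ) * I) = 0 := by linear_combination -hWcalc
    exact neg_eq_zero.mp h'
  have : (Real.pi:ℂ) ≠ 0 := Complex.ofReal_ne_zero.mpr Real.pi_ne_zero
  exact (mul_ne_zero (mul_ne_zero two_ne_zero this) Complex.I_ne_zero) hz

/-- no entire nowhere-vanishing function satisfies the theta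
quasi-periodicity; hence the theta function must have zeros. -/
theorem no_nonvanishing_theta_quasiperiodic (g : ℕ) (hg : 1 ≤ g)
    (T : Matrix (Fin g) (Fin g) ℂ) (hsym : ∀ α β, T α β = T β α)
    (hpos : ∀ v : Fin g → ℝ, v ≠ 0 → 0 < ∑ α, ∑ β, (T α β).im * v α * v β) :
    ¬ ∃ f : (Fin g → ℂ) → ℂ, Differentiable ℂ f ∧ (∀ z, f z ≠ 0) ∧
      (∀ (z : Fin g → ℂ) (N M : Fin g → ℤ),
        f (fun α => z α + (N α : ℂ) + ∑ β, T α β * (M β : ℂ)) =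
          Complex.exp (-(Real.pi * I) * (∑ α, ∑ β, (M α : ℂ) * T α β * (M β : ℂ)) -
            2 * Real.pi * I * ∑ α, (M α : ℂ) * z α) * f z) := by
  rintro ⟨f, hdf, hne, hq⟩
  classical
  set j : Fin g := ⟨0, hg⟩ with hj
  set Φ : ℂ → ℂ → ℂ :=
    fun t w => f (fun α => t * T α j + w * (if α = j then 1 else 0)) with hΦ
  have hdiff : ∀ t, Differentiable ℂ (Φ t) := by
    intro t
    apply hdf.comp
    apply differentiable_pi.mpr
    intro α
    exact (differentiable_const _).add (differentiable_id.mul (differentiable_const _))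
  have hcont : Continuous fun q : ℂ × ℂ => Φ q.1 q.2 := by
    apply hdf.continuous.comp
    apply continuous_pi
    intro α
    exact (continuous_fst.mul continuous_const).add (continuous_snd.mul continuous_const)
  have hn0 : ∀ t w, Φ t w ≠ 0 := fun t w => hne _
  have hper : ∀ t w, Φ t (w + 1) = Φ t w := by
    intro t w
    have h := hq (fun α => t * T α j + w * (if α = j then 1 else 0))
      (fun α => if α = j then 1 else 0) 0
    simp only [Pi.zero_apply, Int.cast_zero, mul_zero, Finset.sum_const_zero, add_zero,
      zero_mul, neg_zero, sub_zero, Complex.exp_zero, one_mul,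
      apply_ite (Int.cast : ℤ → ℂ), Int.cast_one] at h
    have harg : (fun α => t * T α j + (w + 1) * (if α = j then (1:ℂ) else 0)) =
        (fun α => t * T α j + w * (if α = j then (1:ℂ) else 0) +
          (if α = j then (1:ℂ) else 0)) := by
      funext α
      by_cases hα : α = j <;> simp [hα] <;> ring
    show f (fun α => t * T α j + (w + 1) * (if α = j then 1 else 0)) = Φ t w
    rw [harg]
    exact h
  have hshift : ∀ w : ℂ, Φ 1 w = Complex.exp ((-(Real.pi * I) * T j j) +
      (-(2 * (Real.pi : ℂ) * I)) * w) * Φ 0 w := by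
    intro w
    have h := hq (fun α => 0 * T α j + w * (if α = j then 1 else 0)) 0
      (fun α => if α = j then 1 else 0)
    simp only [Pi.zero_apply, Int.cast_zero, add_zero, zero_mul, one_mul,
      apply_ite (Int.cast : ℤ → ℂ), Int.cast_one, mul_ite, ite_mul, mul_zero, mul_one,
      Finset.sum_ite_eq', Finset.mem_univ, if_true] at h
    have e1 : (fun α => (1:ℂ) * T α j + w * (if α = j then 1 else 0)) =
        (fun α => ((0:ℂ) + if α = j then w else 0) + T α j) := by
      funext α
      by_cases hα : α = j <;> simp [hα] <;> ring
    have e0 : (fun α => (0:ℂ) * T α j + w * (if α = j then 1 else 0)) =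
        (fun α => (0:ℂ) + if α = j then w else 0) := by
      funext α
      by_cases hα : α = j <;> simp [hα]
    show Φ 1 w = _
    rw [hΦ]
    simp only []
    rw [e1, e0, h]
    congr 1
    ring
  exact aux_main Φ hdiff hcont hn0 hper (-(Real.pi * I) * T j j) hshift
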